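/- Let β > 1 and let y be a nonnegative β-integer with β-expansion y_n y_{n−1} ⋯ y_k 0^k (so y_k ≠ 0 and the last k digits are zero), where β is a simple Parry number with d_β(1) = t_1⋯t_m. Then the distance from y to its predecessor in ℤ_β is y − pred(y) = T_β^{k'}(1), where k' ∈ {0,...,m−1} satisfies k' ≡ k (mod m). -/

import Mathlib

section Stmt16Aux

/-! ### List lemmas -/

lemma lex_elim {a b : List ℕ} (h : List.Lex (· < ·) a b) :
    ∃ s, (∀ j, j < s → a.getD j 0 = b.getD j 0) ∧
      ((s = a.length ∧ s < b.length) ∨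
        (s < a.length ∧ s < b.length ∧ a.getD s 0 < b.getD s 0)) := by
  induction h with
  | nil => exact ⟨0, by simp, Or.inl ⟨rfl, by simp⟩⟩
  | @rel x l1 y l2 hxy => exact ⟨0, by simp, Or.inr ⟨by simp, by simp, by simpa using hxy⟩⟩
  | @cons x l1 l2 h ih =>
    obtain ⟨s, h1, h2⟩ := ih
    refine ⟨s + 1, ?_, ?_⟩
    · intro j hj
      cases j with
      | zero => simp
      | succ j => simpa using h1 j (by omega)
    · rcases h2 with ⟨h2, h3⟩ | ⟨h2, h3, h4⟩
      · exact Or.inl ⟨by simp [h2], by simpa using h3⟩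
      · exact Or.inr ⟨by simpa using h2, by simpa using h3, by simpa using h4⟩

lemma lex_intro_prefix : ∀ {a b : List ℕ}, a.length < b.length →
    (∀ j, j < a.length → a.getD j 0 = b.getD j 0) → List.Lex (· < ·) a b := by
  intro a
  induction a with
  | nil => intro b hb _; cases b with
    | nil => simp at hb
    | cons y l => exact List.Lex.nil
  | cons x l ih =>
    intro b hb heq
    cases b with
    | nil => simp at hb
    | cons y l' =>
      have h0 := heq 0 (by simp)
      simp at h0
      subst h0
      exact List.Lex.cons (ih (by simpa using hb)
        fun j hj => by simpa using heq (j+1) (by simpa using hj))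

lemma lex_intro_drop : ∀ (s : ℕ) {a b : List ℕ}, s < a.length → s < b.length →
    (∀ j, j < s → a.getD j 0 = b.getD j 0) → a.getD s 0 < b.getD s 0 →
    List.Lex (· < ·) a b := by
  intro s
  induction s with
  | zero =>
    intro a b ha hb _ hlt
    cases a with
    | nil => simp at ha
    | cons x l => cases b with
      | nil => simp at hb
      | cons y l' => exact List.Lex.rel (by simpa using hlt)
  | succ s ih =>
    intro a b ha hb heq hlt
    cases a with
    | nil => simp at ha
    | cons x l => cases b with
      | nil => simp at hb
      | cons y l' =>
        have h0 := heq 0 (by omega)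
        simp at h0
        subst h0
        exact List.Lex.cons (ih (by simpa using ha) (by simpa using hb)
          (fun j hj => by simpa using heq (j+1) (by omega)) (by simpa using hlt))

lemma lex_mono : ∀ (A : List ℕ) {D : List ℕ} {x x' : ℕ} (B B' : List ℕ),
    x' < x → List.Lex (· < ·) (A ++ x :: B) D → List.Lex (· < ·) (A ++ x' :: B') D := by
  intro A
  induction A with
  | nil =>
    intro D x x' B B' hx h
    cases D with
    | nil => cases h
    | cons d D' =>
      simp only [List.nil_append] at h ⊢
      cases h with
      | rel h => exact List.Lex.rel (by omega)
      | cons h => exact List.Lex.rel (by omega)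
  | cons a A' ih =>
    intro D x x' B B' hx h
    cases D with
    | nil => cases h
    | cons d D' =>
      simp only [List.cons_append] at h ⊢
      cases h with
      | rel h => exact List.Lex.rel h
      | cons h => exact List.Lex.cons (ih B B' hx h)

lemma getD_reverse_take {M : List ℕ} {i j : ℕ} (hi : i < M.length) (hj : j ≤ i) :
    ((M.take (i+1)).reverse).getD j 0 = M.getD (i - j) 0 := by
  have hlen : (M.take (i+1)).length = i+1 := by simp; omega
  rw [List.getD_eq_getElem _ _ (by simp [hlen]; omega),
      List.getD_eq_getElem _ _ (by omega)]
  rw [List.getElem_reverse]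
  have : (M.take (i+1)).length - 1 - j = i - j := by omega
  simp_rw [this]
  rw [List.getElem_take]

lemma getD_D {t : ℕ → ℕ} {m j : ℕ} (hj : j < m) :
    (((List.range m).map fun j => t (j+1)).getD j 0) = t (j+1) := by
  rw [List.getD_eq_getElem _ _ (by simpa using hj)]
  simp

lemma getD_ofFn {f : ℕ → ℕ} {ℓ j : ℕ} (hj : j < ℓ) :
    (List.ofFn (fun j : Fin ℓ => f j)).getD j 0 = f j := by
  rw [List.getD_eq_getElem _ _ (by simpa using hj)]
  simp

lemma getD_take {M : List ℕ} {d i : ℕ} (hi : i < d) :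
    (M.take d).getD i 0 = M.getD i 0 := by
  by_cases h : i < M.length
  · rw [List.getD_eq_getElem _ _ (by simp; omega), List.getD_eq_getElem _ _ h]
    rw [List.getElem_take]
  · rw [List.getD_eq_default _ _ (by simp; omega), List.getD_eq_default _ _ (by omega)]

lemma getD_drop (L : List ℕ) (a j : ℕ) : (L.drop a).getD j 0 = L.getD (a + j) 0 := by
  by_cases h : a + j < L.length
  · rw [List.getD_eq_getElem _ _ (by simp; omega), List.getD_eq_getElem _ _ h]
    rw [List.getElem_drop]
  · rw [List.getD_eq_default _ _ (by simp; omega), List.getD_eq_default _ _ (by omega)]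

lemma getD_append_left {l1 l2 : List ℕ} {i : ℕ} (h : i < l1.length) :
    (l1 ++ l2).getD i 0 = l1.getD i 0 := by
  rw [List.getD_eq_getElem _ _ (by simp; omega), List.getD_eq_getElem _ _ h]
  exact List.getElem_append_left h

lemma getD_append_right {l1 l2 : List ℕ} {i : ℕ} (h : l1.length ≤ i) :
    (l1 ++ l2).getD i 0 = l2.getD (i - l1.length) 0 := by
  by_cases h2 : i < l1.length + l2.length
  · rw [List.getD_eq_getElem _ _ (by simp; omega), List.getD_eq_getElem _ _ (by omega)]
    exact List.getElem_append_right h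
  · rw [List.getD_eq_default _ _ (by simp; omega), List.getD_eq_default _ _ (by omega)]

lemma eq_of_getD {l l' : List ℕ} (hlen : l.length = l'.length)
    (h : ∀ j, j < l.length → l.getD j 0 = l'.getD j 0) : l = l' := by
  apply List.ext_getElem hlen
  intro j h1 h2
  rw [← List.getD_eq_getElem l 0 h1, ← List.getD_eq_getElem l' 0 h2]
  exact h j h1

lemma cons_getD {l : List ℕ} (h : 0 < l.length) : l = l.getD 0 0 :: l.tail := by
  cases l with
  | nil => simp at h
  | cons a l => simp [List.getD]

lemma decomp_at {l : List ℕ} {d : ℕ} (h : d < l.length) :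
    l = l.take d ++ l.getD d 0 :: l.drop (d+1) := by
  conv_lhs => rw [← List.take_append_drop d l]
  congr 1
  rw [List.getD_eq_getElem _ _ h]
  exact (List.drop_eq_getElem_cons h)

lemma mod_succ_zero {n m : ℕ} (hm : 0 < m) (h : n % m = m - 1) : (n + 1) % m = 0 := by
  rcases Nat.lt_or_ge 1 m with h2 | h2
  · rw [Nat.add_mod, h, Nat.mod_eq_of_lt h2, show m - 1 + 1 = m by omega, Nat.mod_self]
  · interval_cases m <;> simp_all

lemma mod_succ_succ {n m : ℕ} (h : n % m + 1 < m) : (n + 1) % m = n % m + 1 := by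
  have h2 : 1 < m := by omega
  rw [Nat.add_mod, Nat.mod_eq_of_lt h2, Nat.mod_eq_of_lt h]

/-! ### The quasi-greedy digit sequence -/

def uu (t : ℕ → ℕ) (m : ℕ) : ℕ → ℕ := fun j => if j % m = m - 1 then t m - 1 else t (j % m + 1)

section

variable {β : ℝ} {m : ℕ} {t : ℕ → ℕ} {S : ℕ → ℝ}
variable (hβ : 1 < β) (hm : 0 < m)
variable (hS0 : S 0 = 1) (hSrec : ∀ j, S (j + 1) = β * S j - t (j + 1))
variable (hSpos : ∀ j, j < m → 0 < S j) (hSm : S m = 0)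
variable (hSnonneg : ∀ j, 0 ≤ S j) (hSle : ∀ j, S j ≤ 1)
variable (hSlt : ∀ j, 1 ≤ j → S j < 1) (ht1 : 0 < t 1)

set_option linter.unusedSectionVars false

include hSrec in
lemma key_sum (r : ℕ) : ∀ n : ℕ,
    β ^ n * S r - S (r + n) = ∑ i ∈ Finset.range n, (t (r + n - i) : ℝ) * β ^ i := by
  intro n
  induction n with
  | zero => simp
  | succ n ihn =>
    have hrec := hSrec (r + n)
    rw [Finset.sum_range_succ']
    have : ∀ i ∈ Finset.range n, (t (r + (n+1) - (i+1)) : ℝ) * β ^ (i+1)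
        = β * ((t (r + n - i) : ℝ) * β ^ i) := by
      intro i hi
      have : r + (n+1) - (i+1) = r + n - i := by omega
      rw [this]; ring
    rw [Finset.sum_congr rfl this, ← Finset.mul_sum, ← ihn]
    have h2 : r + (n + 1) - 0 = (r + n) + 1 := by omega
    have h3 : r + (n + 1) = (r + n) + 1 := by omega
    rw [h2, h3, hrec, pow_succ]
    ring

include hβ hm hSrec hSm hSpos in
lemma tm_pos : 0 < t m := by
  have h1 : S m = β * S (m-1) - t m := by
    simpa [show m - 1 + 1 = m by omega] using hSrec (m-1)
  rw [hSm] at h1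
  have hpos : 0 < β * S (m - 1) := by
    have := hSpos (m-1) (by omega)
    positivity
  have : (0:ℝ) < (t m : ℝ) := by linarith
  exact_mod_cast this

include hβ hm hS0 hSrec hSm hSpos in
lemma u_val (n : ℕ) : (uu t m n : ℝ) = β * S (n % m) - S ((n + 1) % m) := by
  by_cases h : n % m = m - 1
  · have h1 : (n+1) % m = 0 := mod_succ_zero hm h
    have h2 : S m = β * S (m-1) - t m := by
      simpa [show m - 1 + 1 = m by omega] using hSrec (m-1)
    rw [hSm] at h2
    have htm := tm_pos hβ hm hSrec hSpos hSm
    have h3 : uu t m n = t m - 1 := by simp [uu, h]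
    rw [h3, h1, h, hS0, Nat.cast_sub htm]
    push_cast
    linarith
  · have hlt : n % m + 1 < m := by
      have := Nat.mod_lt n hm; omega
    have h1 : (n+1) % m = n % m + 1 := mod_succ_succ hlt
    have h3 : uu t m n = t (n % m + 1) := by simp [uu, h]
    rw [h3, h1]
    have := hSrec (n % m)
    linarith

include hβ hm hS0 hSrec hSm hSpos in
lemma quasi_sum : ∀ n : ℕ,
    ∑ i ∈ Finset.range n, (uu t m (n - 1 - i) : ℝ) * β ^ i = β ^ n - S (n % m) := by
  intro n
  induction n with
  | zero => simp [Nat.mod_eq_of_lt hm, hS0]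
  | succ n ihn =>
    rw [Finset.sum_range_succ']
    have e1 : ∀ i ∈ Finset.range n, (uu t m (n + 1 - 1 - (i+1)) : ℝ) * β ^ (i+1)
        = β * ((uu t m (n - 1 - i) : ℝ) * β ^ i) := by
      intro i hi
      rw [show n + 1 - 1 - (i+1) = n - 1 - i by omega]; ring
    rw [Finset.sum_congr rfl e1, ← Finset.mul_sum, ihn]
    have e2 : n + 1 - 1 - 0 = n := by omega
    rw [e2, u_val hβ hm hS0 hSrec hSpos hSm (t := t) n, pow_succ]
    ring

include hβ hm hS0 hSrec hSm hSpos hSnonneg hSle in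
lemma pow_mul_S_ge : ∀ (a r : ℕ), r < m → S ((r + a) % m) ≤ β ^ a * S r := by
  intro a
  induction a with
  | zero => intro r hr; simp [Nat.mod_eq_of_lt hr]
  | succ a ih =>
    intro r hr
    have hβS : β * S r = t (r + 1) + S (r + 1) := by
      have := hSrec r; linarith
    by_cases hr1 : r + 1 < m
    · have h1 : S ((r + 1 + a) % m) ≤ β ^ a * S (r + 1) := ih (r+1) hr1
      have h2 : β ^ a * S (r+1) ≤ β ^ a * (β * S r) := by
        have h3 : S (r+1) ≤ β * S r := by
          have : (0:ℝ) ≤ t (r+1) := by positivity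
          linarith
        have h4 : (0:ℝ) < β ^ a := by positivity
        nlinarith
      have heq : (r + (a + 1)) % m = (r + 1 + a) % m := by
        congr 1; omega
      calc S ((r + (a+1)) % m) = S ((r+1+a) % m) := by rw [heq]
        _ ≤ β ^ a * S (r+1) := h1
        _ ≤ β ^ a * (β * S r) := h2
        _ = β ^ (a+1) * S r := by ring
    · have hrm : r + 1 = m := by omega
      have htm : β * S r = t m := by
        rw [hβS, hrm, hSm]; ring
      have h1 : 1 ≤ (t m : ℝ) := by
        have := tm_pos hβ hm hSrec hSpos hSm (t := t)
        exact_mod_cast this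
      have hba : (1:ℝ) ≤ β ^ a := one_le_pow₀ (le_of_lt hβ)
      calc S ((r + (a+1)) % m) ≤ 1 := hSle _
        _ ≤ β ^ a * (β * S r) := by rw [htm]; nlinarith
        _ = β ^ (a+1) * S r := by ring

include hβ hm hS0 hSrec hSm hSnonneg hSle hSlt in
lemma drop_exists {r : ℕ} (hr : r < m)
    (hnp : ¬ ∀ j, 1 ≤ j → j ≤ m - r → t (r + j) = t j) :
    ∃ i, 1 ≤ i ∧ i ≤ m - r ∧ (∀ j, 1 ≤ j → j < i → t (r + j) = t j) ∧ t (r + i) < t i := by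
  have hr1 : 1 ≤ r := by
    by_contra h
    have : r = 0 := by omega
    subst this
    exact hnp (fun j _ _ => by rw [Nat.zero_add])
  push_neg at hnp
  obtain ⟨j0, hj1, hj2, hj3⟩ := hnp
  have hex : ∃ i, 1 ≤ i ∧ i ≤ m - r ∧ t (r + i) ≠ t i := ⟨j0, hj1, hj2, hj3⟩
  set i := Nat.find hex with hi
  obtain ⟨hi1, hi2, hi3⟩ := Nat.find_spec hex
  rw [← hi] at hi1 hi2 hi3
  have hminlt : ∀ j, 1 ≤ j → j < i → t (r + j) = t j := by
    intro j h1 h2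
    by_contra hne
    exact Nat.find_min hex h2 ⟨h1, by omega, hne⟩
  refine ⟨i, hi1, hi2, hminlt, ?_⟩
  by_contra hge
  have hgt : t i < t (r + i) := by omega
  exfalso
  have A := key_sum hSrec r i
  have B := key_sum hSrec 0 i
  have hi' : i = (i - 1) + 1 := by omega
  have hsum : (∑ jj ∈ Finset.range i, (t (r + i - jj) : ℝ) * β ^ jj)
      - (∑ jj ∈ Finset.range i, (t (0 + i - jj) : ℝ) * β ^ jj)
      = (t (r + i) : ℝ) - (t i : ℝ) := by
    rw [hi', Finset.sum_range_succ', Finset.sum_range_succ']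
    have e : ∀ jj ∈ Finset.range (i - 1),
        (t (r + ((i-1)+1) - (jj+1)) : ℝ) * β ^ (jj+1)
          = (t (0 + ((i-1)+1) - (jj+1)) : ℝ) * β ^ (jj+1) := by
      intro jj hjj
      simp only [Finset.mem_range] at hjj
      have h1 : r + ((i-1)+1) - (jj+1) = r + (i - 1 - jj) := by omega
      have h2 : 0 + ((i-1)+1) - (jj+1) = i - 1 - jj := by omega
      rw [h1, h2, hminlt (i - 1 - jj) (by omega) (by omega)]
    rw [Finset.sum_congr rfl e]
    have h1 : r + ((i-1)+1) - 0 = r + i := by omega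
    have h2 : 0 + ((i-1)+1) - 0 = i := by omega
    rw [h1, h2, ← hi']
    ring
  rw [← A, ← B] at hsum
  have hd : (t i : ℝ) + 1 ≤ (t (r + i) : ℝ) := by exact_mod_cast hgt
  have h1 : S r < 1 := hSlt r hr1
  have h2 : 0 ≤ S (r + i) := hSnonneg _
  have h3 : S (0 + i) ≤ 1 := hSle _
  have hb : (0:ℝ) < β ^ i := by positivity
  rw [hS0] at hsum
  nlinarith [hsum, hd, h1, h2, h3, hb]

include hβ hm hS0 hSrec hSm hSpos hSnonneg hSle hSlt in
lemma window_lt (a ℓ : ℕ) :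
    List.Lex (· < ·) (List.ofFn fun j : Fin ℓ => uu t m (a + j))
      ((List.range m).map fun j => t (j + 1)) := by
  classical
  set D := (List.range m).map fun j => t (j + 1) with hD
  have hDlen : D.length = m := by simp [hD]
  set W := List.ofFn fun j : Fin ℓ => uu t m (a + j) with hWdef
  have hWlen : W.length = ℓ := by simp [hWdef]
  have hWget : ∀ j, j < ℓ → W.getD j 0 = uu t m (a + j) :=
    fun j hj => getD_ofFn (f := fun x => uu t m (a + x)) hj
  set r := a % m with hr
  have hrm : r < m := Nat.mod_lt _ hm
  have hmod : ∀ j, (a + j) % m = (r + j) % m := by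
    intro j
    conv_lhs => rw [Nat.add_mod a j m]
    conv_rhs => rw [Nat.add_mod r j m]
    rw [Nat.mod_eq_of_lt hrm]
  have htm : 0 < t m := tm_pos hβ hm hSrec hSpos hSm
  by_cases hpre : ∀ j, 1 ≤ j → j ≤ m - r → t (r + j) = t j
  · set p := m - 1 - r with hp
    have hkey : ∀ j, j < p → uu t m (a + j) = t (j + 1) := by
      intro j hj
      have h1 : (a + j) % m = r + j := by rw [hmod j, Nat.mod_eq_of_lt (by omega)]
      have h2 : ¬ (r + j = m - 1) := by omega
      have h3 : uu t m (a + j) = t (r + j + 1) := by simp [uu, h1, h2]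
      rw [h3]
      have h4 := hpre (j + 1) (by omega) (by omega)
      rwa [show r + (j + 1) = r + j + 1 by omega] at h4
    by_cases hℓ : ℓ ≤ p
    · apply lex_intro_prefix (by rw [hWlen, hDlen]; omega)
      intro j hj
      rw [hWlen] at hj
      rw [hWget j hj, hkey j (by omega), getD_D (by omega)]
    · push_neg at hℓ
      apply lex_intro_drop p (by rw [hWlen]; omega) (by rw [hDlen]; omega)
      · intro j hj
        rw [hWget j (by omega), hkey j hj, getD_D (by omega)]
      · rw [hWget p (by omega), getD_D (by omega)]
        have h1 : (a + p) % m = m - 1 := by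
          rw [hmod p, show r + p = m - 1 by omega, Nat.mod_eq_of_lt (by omega)]
        have h2 : uu t m (a + p) = t m - 1 := by simp [uu, h1]
        have h3 : t (p + 1) = t m := by
          have h4 := hpre (m - r) (by omega) (by omega)
          rw [show r + (m - r) = m by omega] at h4
          rw [show p + 1 = m - r by omega]
          exact h4.symm
        rw [h2, h3]
        omega
  · obtain ⟨i, hi1, hi2, heq, hdrop⟩ := drop_exists hβ hm hS0 hSrec hSm hSnonneg hSle hSlt hrm hpre
    set p := i - 1 with hp
    have hkey : ∀ j, j < p → uu t m (a + j) = t (j + 1) := by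
      intro j hj
      have h1 : (a + j) % m = r + j := by rw [hmod j, Nat.mod_eq_of_lt (by omega)]
      have h2 : ¬ (r + j = m - 1) := by omega
      have h3 : uu t m (a + j) = t (r + j + 1) := by simp [uu, h1, h2]
      rw [h3]
      have h4 := heq (j + 1) (by omega) (by omega)
      rwa [show r + (j + 1) = r + j + 1 by omega] at h4
    by_cases hℓ : ℓ ≤ p
    · apply lex_intro_prefix (by rw [hWlen, hDlen]; omega)
      intro j hj
      rw [hWlen] at hj
      rw [hWget j hj, hkey j (by omega), getD_D (by omega)]
    · push_neg at hℓ
      apply lex_intro_drop p (by rw [hWlen]; omega) (by rw [hDlen]; omega)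
      · intro j hj
        rw [hWget j (by omega), hkey j hj, getD_D (by omega)]
      · rw [hWget p (by omega), getD_D (by omega)]
        have h1 : (a + p) % m = r + p := by
          rw [hmod p, Nat.mod_eq_of_lt (by omega)]
        by_cases hb : r + p = m - 1
        · have h2 : uu t m (a + p) = t m - 1 := by simp [uu, h1, hb]
          have h3 : t m = t (r + i) := by rw [show r + i = m by omega]
          rw [h2, h3, show p + 1 = i by omega]
          omega
        · have h2 : uu t m (a + p) = t (r + p + 1) := by simp [uu, h1, hb]
          rw [h2, show r + p + 1 = r + i by omega, show p + 1 = i by omega]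
          exact hdrop

include hβ hm hS0 hSrec hSpos hSm hSnonneg hSle in
lemma val_le : ∀ (n : ℕ) (M : List ℕ), M.length = n →
    (∀ i, i < M.length → List.Lex (· < ·) ((M.take (i+1)).reverse)
      ((List.range m).map fun j => t (j+1))) →
    ∑ i ∈ Finset.range M.length, (M.getD i 0 : ℝ) * β ^ i ≤ β ^ n - S (n % m) := by
  intro n
  induction n using Nat.strong_induction_on with
  | _ n ih =>
    intro M hlen hadm
    rcases Nat.eq_zero_or_pos n with h0 | hn
    · subst h0
      have : M = [] := List.length_eq_zero_iff.mp hlen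
      subst this
      simp [Nat.zero_mod, hS0]
    · have hrev := hadm (n - 1) (by omega)
      rw [show n - 1 + 1 = n by omega] at hrev
      obtain ⟨s, hagree, hcase⟩ := lex_elim hrev
      have hrevlen : ((M.take n).reverse).length = n := by simp; omega
      have hDlen : (((List.range m).map fun j => t (j+1))).length = m := by simp
      have hget : ∀ j, j < n → ((M.take n).reverse).getD j 0 = M.getD (n - 1 - j) 0 := by
        intro j hj
        have := getD_reverse_take (M := M) (i := n - 1) (j := j) (by omega) (by omega)
        rwa [show n - 1 + 1 = n by omega] at this
      rcases hcase with ⟨hs1, hs2⟩ | ⟨hs1, hs2, hs3⟩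
      · rw [hrevlen] at hs1
        rw [hDlen] at hs2
        have hnm : n < m := hs1 ▸ hs2
        rw [hs1] at hagree
        have hMi : ∀ i, i < n → (M.getD i 0 : ℝ) = t (0 + n - i) := by
          intro i hi
          have h1 := hagree (n - 1 - i) (by omega)
          rw [hget _ (by omega), show n - 1 - (n - 1 - i) = i by omega,
            getD_D (by omega)] at h1
          rw [h1, show n - 1 - i + 1 = 0 + n - i by omega]
        rw [hlen, Finset.sum_congr rfl (fun i hi => by
          rw [hMi i (Finset.mem_range.mp hi)]), ← key_sum hSrec 0 n]
        rw [Nat.mod_eq_of_lt hnm, hS0, Nat.zero_add]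
        apply le_of_eq
        ring
      · rw [hrevlen] at hs1
        rw [hDlen] at hs2
        set d := n - 1 - s with hd
        have hsplit : ∑ i ∈ Finset.range n, (M.getD i 0 : ℝ) * β ^ i
            = (∑ i ∈ Finset.range d, (M.getD i 0 : ℝ) * β ^ i)
              + (M.getD d 0 : ℝ) * β ^ d
              + ∑ j ∈ Finset.range s, (M.getD (d + 1 + j) 0 : ℝ) * β ^ (d + 1 + j) := by
          have e3 := Finset.sum_Ico_eq_sum_range
            (f := fun i => (M.getD i 0 : ℝ) * β ^ i) (m := d + 1) (n := n)
          rw [show n - (d+1) = s by omega] at e3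
          rw [Finset.range_eq_Ico, ← Finset.sum_Ico_consecutive _ (Nat.zero_le d) (by omega : d ≤ n),
            Finset.sum_eq_sum_Ico_succ_bot (by omega : d < n), e3,
            ← Finset.range_eq_Ico, ← add_assoc]
        have htop : ∑ j ∈ Finset.range s, (M.getD (d + 1 + j) 0 : ℝ) * β ^ (d + 1 + j)
            = β ^ (d+1) * (β ^ s * S 0 - S (0 + s)) := by
          rw [key_sum hSrec 0 s, Finset.mul_sum]
          apply Finset.sum_congr rfl
          intro j hj
          have hj' : j < s := Finset.mem_range.mp hj
          have h1 := hagree (s - 1 - j) (by omega)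
          rw [hget _ (by omega)] at h1
          rw [show n - 1 - (s - 1 - j) = d + 1 + j by omega, getD_D (by omega)] at h1
          rw [h1, show s - 1 - j + 1 = 0 + s - j by omega, pow_add]
          ring
        have hmid : (M.getD d 0 : ℝ) ≤ (t (s+1) : ℝ) - 1 := by
          rw [hget s (by omega), getD_D (by omega)] at hs3
          have h2 : M.getD d 0 < t (s+1) := by rw [hd]; exact hs3
          have h3 : M.getD d 0 + 1 ≤ t (s+1) := h2
          have h4 : ((M.getD d 0 : ℕ) : ℝ) + 1 ≤ (t (s+1) : ℝ) := by exact_mod_cast h3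
          linarith
        have hlow : ∑ i ∈ Finset.range d, (M.getD i 0 : ℝ) * β ^ i ≤ β ^ d - S (d % m) := by
          have hadm' : ∀ i, i < (M.take d).length →
              List.Lex (· < ·) (((M.take d).take (i+1)).reverse)
                ((List.range m).map fun j => t (j+1)) := by
            intro i hi
            have hi' : i < d := by simp at hi; omega
            rw [List.take_take, min_eq_left (by omega)]
            exact hadm i (by omega)
          have hlen' : (M.take d).length = d := by simp; omega
          have h5 := ih d (by omega) (M.take d) hlen' hadm'
          rw [hlen'] at h5
          calc ∑ i ∈ Finset.range d, (M.getD i 0 : ℝ) * β ^ i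
              = ∑ i ∈ Finset.range d, ((M.take d).getD i 0 : ℝ) * β ^ i := by
                apply Finset.sum_congr rfl
                intro i hi
                rw [getD_take (Finset.mem_range.mp hi)]
            _ ≤ β ^ d - S (d % m) := h5
        have hβd : (0:ℝ) < β ^ d := by positivity
        have hexp : n = d + 1 + s := by omega
        have hfin : S (n % m) ≤ β ^ d * S (s+1) + S (d % m) := by
          by_cases hsm : s + 1 < m
          · have h6 := pow_mul_S_ge hβ hm hS0 hSrec hSpos hSm hSnonneg hSle d (s+1) hsm
            rw [show (s+1+d) % m = n % m by congr 1; omega] at h6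
            have := hSnonneg (d % m)
            linarith
          · have hsm' : s + 1 = m := by omega
            have h7 : d % m = n % m := by
              have h8 : n % m = (n - m) % m := Nat.mod_eq_sub_mod (by omega)
              rw [h8, show n - m = d by omega]
            rw [hsm', hSm, h7]
            simp
        have hkey : (β ^ d - S (d % m)) + ((t (s+1) : ℝ) - 1) * β ^ d
            + β ^ (d+1) * (β ^ s * S 0 - S (0 + s))
            = β ^ n - S (d % m) - β ^ d * S (s+1) := by
          have en : β ^ n = β ^ (d+1) * β ^ s := by rw [hexp, pow_add]
          rw [en, hSrec s, hS0, Nat.zero_add, pow_succ]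
          ring
        have hmid' : (M.getD d 0 : ℝ) * β ^ d ≤ ((t (s+1) : ℝ) - 1) * β ^ d :=
          mul_le_mul_of_nonneg_right hmid (le_of_lt hβd)
        rw [hlen, hsplit]
        linarith [htop, hlow, hmid', hkey, hfin]

include hβ hm hS0 hSrec hSpos hSm hSnonneg hSle ht1 in
lemma val_le_pad (n : ℕ) (M : List ℕ)
    (hadm : ∀ i, i < M.length → List.Lex (· < ·) ((M.take (i+1)).reverse)
      ((List.range m).map fun j => t (j+1))) :
    ∑ i ∈ Finset.range n, (M.getD i 0 : ℝ) * β ^ i ≤ β ^ n - S (n % m) := by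
  classical
  rcases le_or_gt n M.length with hc | hc
  · have hlen' : (M.take n).length = n := by rw [List.length_take, min_eq_left hc]
    have hadm' : ∀ i, i < (M.take n).length →
        List.Lex (· < ·) (((M.take n).take (i+1)).reverse)
          ((List.range m).map fun j => t (j+1)) := by
      intro i hi
      rw [hlen'] at hi
      rw [List.take_take, min_eq_left (by omega)]
      exact hadm i (by omega)
    have h5 := val_le hβ hm hS0 hSrec hSpos hSm hSnonneg hSle n (M.take n) hlen' hadm'
    rw [hlen'] at h5
    calc ∑ i ∈ Finset.range n, (M.getD i 0 : ℝ) * β ^ i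
        = ∑ i ∈ Finset.range n, ((M.take n).getD i 0 : ℝ) * β ^ i := by
          refine Finset.sum_congr rfl fun i hi => ?_
          rw [getD_take (Finset.mem_range.mp hi)]
      _ ≤ β ^ n - S (n % m) := h5
  · set P := M ++ List.replicate (n - M.length) 0 with hP
    have hPlen : P.length = n := by
      rw [hP, List.length_append, List.length_replicate]; omega
    have hrep : ∀ j : ℕ, (List.replicate (n - M.length) (0:ℕ)).getD j 0 = 0 := by
      intro j
      by_cases h : j < n - M.length
      · rw [List.getD_eq_getElem _ _ (by simpa using h)]; simp
      · rw [List.getD_eq_default _ _ (by simpa using h)]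
    have hPget : ∀ i, P.getD i 0 = M.getD i 0 := by
      intro i
      by_cases h : i < M.length
      · rw [hP, getD_append_left h]
      · rw [List.getD_eq_default M _ (by omega), hP, getD_append_right (by omega), hrep]
    have hPadm : ∀ i, i < P.length → List.Lex (· < ·) ((P.take (i+1)).reverse)
        ((List.range m).map fun j => t (j+1)) := by
      intro i hi
      rw [hPlen] at hi
      by_cases h : i < M.length
      · have htk : P.take (i+1) = M.take (i+1) := by
          rw [hP, List.take_append_of_le_length (by omega)]
        rw [htk]
        exact hadm i h
      · apply lex_intro_drop 0 (by simp; omega) (by simp; omega)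
        · intro j hj; exact absurd hj (by omega)
        · have h9 := getD_reverse_take (M := P) (i := i) (j := 0) (by omega) (by omega)
          rw [h9, Nat.sub_zero, hPget i, getD_D hm,
            List.getD_eq_default M _ (by omega)]
          exact ht1
    have h5 := val_le hβ hm hS0 hSrec hSpos hSm hSnonneg hSle n P hPlen hPadm
    rw [hPlen] at h5
    calc ∑ i ∈ Finset.range n, (M.getD i 0 : ℝ) * β ^ i
        = ∑ i ∈ Finset.range n, (P.getD i 0 : ℝ) * β ^ i := by
          refine Finset.sum_congr rfl fun i hi => ?_
          rw [hPget i]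
      _ ≤ β ^ n - S (n % m) := h5

end

lemma sum_split (g : ℕ → ℝ) {d n : ℕ} (h : d < n) :
    ∑ i ∈ Finset.range n, g i
      = (∑ i ∈ Finset.range d, g i) + g d + ∑ i ∈ Finset.Ico (d+1) n, g i := by
  rw [Finset.range_eq_Ico, ← Finset.sum_Ico_consecutive _ (Nat.zero_le d) (le_of_lt h),
    Finset.sum_eq_sum_Ico_succ_bot h, ← Finset.range_eq_Ico, ← add_assoc]

lemma val_ext (β : ℝ) (M : List ℕ) {n : ℕ} (h : M.length ≤ n) :
    ∑ i ∈ Finset.range n, (M.getD i 0 : ℝ) * β ^ i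
      = ∑ i ∈ Finset.range M.length, (M.getD i 0 : ℝ) * β ^ i := by
  symm
  apply Finset.sum_subset (by simp [Finset.range_subset]; omega)
  intro x hx hnx
  simp only [Finset.mem_range] at hnx
  rw [List.getD_eq_default _ _ (by omega)]
  simp

end Stmt16Aux
set_option maxHeartbeats 1000000 in
theorem stmt_16 (β : ℝ) (hβ : 1 < β) (m : ℕ) (hm : 0 < m) (t : ℕ → ℕ)
    (hT0 : ∀ i : ℕ, i < m → 0 < (fun x : ℝ => Int.fract (β * x))^[i] 1)
    (hTm : (fun x : ℝ => Int.fract (β * x))^[m] 1 = 0)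
    (ht : ∀ i : ℕ, (t (i + 1) : ℤ) = ⌊β * (fun x : ℝ => Int.fract (β * x))^[i] 1⌋)
    (Z : Set ℝ)
    (hZ : Z = {x : ℝ | ∃ L : List ℕ,
        (∀ i, i < L.length →
          List.Lex (· < ·) ((L.take (i + 1)).reverse) ((List.range m).map fun j => t (j + 1))) ∧
        x = ∑ i ∈ Finset.range L.length, (L.getD i 0 : ℝ) * β ^ i})
    (y : ℝ) (L : List ℕ) (k : ℕ)
    (hLadm : ∀ i, i < L.length →
        List.Lex (· < ·) ((L.take (i + 1)).reverse) ((List.range m).map fun j => t (j + 1)))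
    (hy : y = ∑ i ∈ Finset.range L.length, (L.getD i 0 : ℝ) * β ^ i)
    (hk : k < L.length) (hk0 : L.getD k 0 ≠ 0) (hlow : ∀ i, i < k → L.getD i 0 = 0)
    (p : ℝ) (hpZ : p ∈ Z) (hpy : p < y) (hpred : ∀ z ∈ Z, z < y → z ≤ p) :
    y - p = (fun x : ℝ => Int.fract (β * x))^[k % m] 1 := by
  classical
  set S : ℕ → ℝ := fun j => (fun x : ℝ => Int.fract (β * x))^[j] 1 with hSdef
  show y - p = S (k % m)
  have hS0 : S 0 = 1 := rfl
  have hSsucc : ∀ j, S (j + 1) = Int.fract (β * S j) := by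
    intro j
    show (fun x : ℝ => Int.fract (β * x))^[j+1] 1 = _
    rw [Function.iterate_succ_apply']
  have ht' : ∀ j, ((t (j + 1) : ℕ) : ℝ) = ((⌊β * S j⌋ : ℤ) : ℝ) := fun j => by
    exact_mod_cast congrArg (fun z : ℤ => (z : ℝ)) (ht j)
  have hSrec : ∀ j, S (j + 1) = β * S j - t (j + 1) := by
    intro j
    rw [hSsucc j, Int.fract, ht' j]
  have hSpos : ∀ j, j < m → 0 < S j := hT0
  have hSm : S m = 0 := hTm
  have hSnonneg : ∀ j, 0 ≤ S j := by
    intro j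
    cases j with
    | zero => rw [hS0]; norm_num
    | succ j => rw [hSsucc]; exact Int.fract_nonneg _
  have hSlt : ∀ j, 1 ≤ j → S j < 1 := by
    intro j hj
    obtain ⟨j', rfl⟩ : ∃ j', j = j' + 1 := ⟨j - 1, by omega⟩
    rw [hSsucc]; exact Int.fract_lt_one _
  have hSle : ∀ j, S j ≤ 1 := by
    intro j
    cases j with
    | zero => rw [hS0]
    | succ j => exact le_of_lt (hSlt _ (by omega))
  have ht1 : 0 < t 1 := by
    have h1 := ht 0
    have h2 : (1 : ℤ) ≤ ⌊β * (fun x : ℝ => Int.fract (β * x))^[0] 1⌋ := by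
      simp only [Function.iterate_zero_apply, mul_one]
      exact Int.le_floor.mpr (by exact_mod_cast hβ.le)
    rw [← h1] at h2
    exact_mod_cast h2
  have hbk : 1 ≤ L.getD k 0 := Nat.pos_of_ne_zero hk0
  have hβ1 : (1:ℝ) ≤ β := le_of_lt hβ
  -- the witness list for the predecessor
  set Q : List ℕ := (List.ofFn fun j : Fin k => uu t m (k - 1 - j))
      ++ (L.getD k 0 - 1) :: L.drop (k + 1) with hQdef
  have hofLen : (List.ofFn fun j : Fin k => uu t m (k - 1 - j)).length = k := by simp
  have hQlen : Q.length = L.length := by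
    rw [hQdef, List.length_append, hofLen, List.length_cons, List.length_drop]
    omega
  have hQ1 : ∀ i, i < k → Q.getD i 0 = uu t m (k - 1 - i) := by
    intro i hi
    rw [hQdef, getD_append_left (by rw [hofLen]; omega)]
    exact getD_ofFn (f := fun x => uu t m (k - 1 - x)) hi
  have hQ2 : Q.getD k 0 = L.getD k 0 - 1 := by
    rw [hQdef, getD_append_right (by rw [hofLen])]
    rw [hofLen]
    simp
  have hQ3 : ∀ i, k < i → Q.getD i 0 = L.getD i 0 := by
    intro i hi
    rw [hQdef, getD_append_right (by rw [hofLen]; omega), hofLen]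
    rw [show i - k = (i - k - 1) + 1 by omega, List.getD_cons_succ, getD_drop,
      show k + 1 + (i - k - 1) = i by omega]
  have hvalQ : ∑ i ∈ Finset.range Q.length, (Q.getD i 0 : ℝ) * β ^ i = y - S (k % m) := by
    rw [hQlen, sum_split (fun i => (Q.getD i 0 : ℝ) * β ^ i) hk]
    have hyy : y = 0 + (L.getD k 0 : ℝ) * β ^ k
        + ∑ i ∈ Finset.Ico (k+1) L.length, (L.getD i 0 : ℝ) * β ^ i := by
      rw [hy, sum_split (fun i => (L.getD i 0 : ℝ) * β ^ i) hk]
      have h0 : ∑ i ∈ Finset.range k, (L.getD i 0 : ℝ) * β ^ i = 0 :=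
        Finset.sum_eq_zero fun i hi => by
          rw [hlow i (Finset.mem_range.mp hi)]; simp
      rw [h0]
    have h1 : ∑ i ∈ Finset.range k, (Q.getD i 0 : ℝ) * β ^ i = β ^ k - S (k % m) := by
      rw [Finset.sum_congr rfl (fun i hi => by rw [hQ1 i (Finset.mem_range.mp hi)])]
      exact quasi_sum hβ hm hS0 hSrec hSpos hSm k
    have h2 : (Q.getD k 0 : ℝ) = (L.getD k 0 : ℝ) - 1 := by
      rw [hQ2, Nat.cast_sub hbk, Nat.cast_one]
    have h3 : ∑ i ∈ Finset.Ico (k+1) L.length, (Q.getD i 0 : ℝ) * β ^ i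
        = ∑ i ∈ Finset.Ico (k+1) L.length, (L.getD i 0 : ℝ) * β ^ i :=
      Finset.sum_congr rfl fun i hi => by
        rw [hQ3 i (by simp only [Finset.mem_Ico] at hi; omega)]
    rw [h1, h2, h3, hyy]
    ring
  have hQadm : ∀ i, i < Q.length → List.Lex (· < ·) ((Q.take (i + 1)).reverse)
      ((List.range m).map fun j => t (j + 1)) := by
    intro i hi
    rw [hQlen] at hi
    rcases lt_trichotomy i k with hik | hik | hik
    · have hlist : (Q.take (i+1)).reverse
          = List.ofFn fun j : Fin (i+1) => uu t m ((k - 1 - i) + j) := by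
        apply eq_of_getD
        · simp; omega
        · intro j hj
          simp only [List.length_reverse, List.length_take] at hj
          have hj' : j < i + 1 := by omega
          rw [getD_reverse_take (by omega) (by omega), hQ1 (i - j) (by omega),
            getD_ofFn (f := fun x => uu t m ((k - 1 - i) + x)) hj']
          congr 1
          omega
      rw [hlist]
      exact window_lt hβ hm hS0 hSrec hSpos hSm hSnonneg hSle hSlt (k - 1 - i) (i + 1)
    · subst hik
      have hL := hLadm i (by omega)
      have hWLlen : 0 < ((L.take (i+1)).reverse).length := by simp; omega
      have hWQlen : 0 < ((Q.take (i+1)).reverse).length := by simp; omega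
      have d1 : (L.take (i+1)).reverse
          = L.getD i 0 :: ((L.take (i+1)).reverse).tail := by
        have h0 : ((L.take (i+1)).reverse).getD 0 0 = L.getD i 0 := by
          rw [getD_reverse_take (by omega) (by omega), Nat.sub_zero]
        rw [← h0]
        exact cons_getD hWLlen
      have d2 : (Q.take (i+1)).reverse
          = (L.getD i 0 - 1) :: ((Q.take (i+1)).reverse).tail := by
        have h0 : ((Q.take (i+1)).reverse).getD 0 0 = L.getD i 0 - 1 := by
          rw [getD_reverse_take (by omega) (by omega), Nat.sub_zero, hQ2]
        rw [← h0]
        exact cons_getD hWQlen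
      rw [d1] at hL
      rw [d2]
      exact lex_mono [] _ _ (by omega) hL
    · have hL := hLadm i (by omega)
      have hdd : i - k < i + 1 := by omega
      have hWLlen : ((L.take (i+1)).reverse).length = i + 1 := by simp; omega
      have hWQlen : ((Q.take (i+1)).reverse).length = i + 1 := by
        rw [List.length_reverse, List.length_take]
        omega
      have e1 := decomp_at (l := (L.take (i+1)).reverse) (d := i - k) (by omega)
      have e2 := decomp_at (l := (Q.take (i+1)).reverse) (d := i - k) (by omega)
      have hvL : ((L.take (i+1)).reverse).getD (i - k) 0 = L.getD k 0 := by
        rw [getD_reverse_take (by omega) (by omega), show i - (i - k) = k by omega]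
      have hvQ : ((Q.take (i+1)).reverse).getD (i - k) 0 = L.getD k 0 - 1 := by
        rw [getD_reverse_take (by omega) (by omega), show i - (i - k) = k by omega, hQ2]
      have htake : ((Q.take (i+1)).reverse).take (i - k)
          = ((L.take (i+1)).reverse).take (i - k) := by
        apply eq_of_getD
        · rw [List.length_take, List.length_take, hWLlen, hWQlen]
        · intro j hj
          rw [List.length_take, hWQlen] at hj
          have hj' : j < i - k := by omega
          rw [getD_take hj', getD_take hj',
            getD_reverse_take (by omega) (by omega),
            getD_reverse_take (by omega) (by omega),
            hQ3 (i - j) (by omega)]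
      rw [e1, hvL] at hL
      rw [e2, hvQ, htake]
      exact lex_mono _ _ _ (by omega) hL
  have hSkpos : 0 < S (k % m) := hSpos _ (Nat.mod_lt _ hm)
  have hqZ : y - S (k % m) ∈ Z := by
    rw [hZ]
    exact ⟨Q, hQadm, hvalQ.symm⟩
  have hqp : y - S (k % m) ≤ p := hpred _ hqZ (by linarith)
  -- maximality : p ≤ y - S (k % m)
  have hmax : p ≤ y - S (k % m) := by
    rw [hZ] at hpZ
    obtain ⟨M, hMadm, hMval⟩ := hpZ
    set N := max M.length L.length with hN
    have hpN : p = ∑ i ∈ Finset.range N, (M.getD i 0 : ℝ) * β ^ i := by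
      rw [hMval, val_ext β M (le_max_left _ _)]
    have hyN : y = ∑ i ∈ Finset.range N, (L.getD i 0 : ℝ) * β ^ i := by
      rw [hy, val_ext β L (le_max_right _ _)]
    have hkN : k < N := lt_of_lt_of_le hk (le_max_right _ _)
    set F := (Finset.range N).filter (fun i => M.getD i 0 ≠ L.getD i 0) with hF
    have hFne : F.Nonempty := by
      rw [hF, Finset.filter_nonempty_iff]
      by_contra hemp
      push_neg at hemp
      have : p = y := by
        rw [hpN, hyN]
        refine Finset.sum_congr rfl fun i hi => ?_
        rw [hemp i hi]
      linarith
    set i0 := F.max' hFne with hi0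
    have hi0F' := Finset.mem_filter.mp (F.max'_mem hFne)
    have hi0N : i0 < N := Finset.mem_range.mp hi0F'.1
    have hi0ne : M.getD i0 0 ≠ L.getD i0 0 := hi0F'.2
    have hhigher : ∀ j, i0 < j → j < N → M.getD j 0 = L.getD j 0 := by
      intro j h1 h2
      by_contra hne
      have hjF : j ∈ F := by
        rw [hF]
        exact Finset.mem_filter.mpr ⟨Finset.mem_range.mpr h2, hne⟩
      have := F.le_max' j hjF
      omega
    have hps : p = (∑ i ∈ Finset.range i0, (M.getD i 0 : ℝ) * β ^ i)
        + (M.getD i0 0 : ℝ) * β ^ i0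
        + ∑ i ∈ Finset.Ico (i0+1) N, (M.getD i 0 : ℝ) * β ^ i := by
      rw [hpN, sum_split (fun i => (M.getD i 0 : ℝ) * β ^ i) hi0N]
    have hys : y = (∑ i ∈ Finset.range i0, (L.getD i 0 : ℝ) * β ^ i)
        + (L.getD i0 0 : ℝ) * β ^ i0
        + ∑ i ∈ Finset.Ico (i0+1) N, (L.getD i 0 : ℝ) * β ^ i := by
      rw [hyN, sum_split (fun i => (L.getD i 0 : ℝ) * β ^ i) hi0N]
    have htails : ∑ i ∈ Finset.Ico (i0+1) N, (M.getD i 0 : ℝ) * β ^ i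
        = ∑ i ∈ Finset.Ico (i0+1) N, (L.getD i 0 : ℝ) * β ^ i := by
      refine Finset.sum_congr rfl fun i hi => ?_
      simp only [Finset.mem_Ico] at hi
      rw [hhigher i (by omega) (by omega)]
    have hMlow : ∑ i ∈ Finset.range i0, (M.getD i 0 : ℝ) * β ^ i
        ≤ β ^ i0 - S (i0 % m) :=
      val_le_pad hβ hm hS0 hSrec hSpos hSm hSnonneg hSle ht1 i0 M hMadm
    have hLlow : ∑ i ∈ Finset.range i0, (L.getD i 0 : ℝ) * β ^ i
        ≤ β ^ i0 - S (i0 % m) :=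
      val_le_pad hβ hm hS0 hSrec hSpos hSm hSnonneg hSle ht1 i0 L hLadm
    have hMlow0 : (0:ℝ) ≤ ∑ i ∈ Finset.range i0, (M.getD i 0 : ℝ) * β ^ i :=
      Finset.sum_nonneg fun i _ => by positivity
    have hLlow0 : (0:ℝ) ≤ ∑ i ∈ Finset.range i0, (L.getD i 0 : ℝ) * β ^ i :=
      Finset.sum_nonneg fun i _ => by positivity
    have hi0pos : 0 < S (i0 % m) := hSpos _ (Nat.mod_lt _ hm)
    have hβi0 : (0:ℝ) < β ^ i0 := by positivity
    have hlt : M.getD i0 0 < L.getD i0 0 := by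
      by_contra hge
      have hgt : L.getD i0 0 < M.getD i0 0 := by omega
      have hc : (L.getD i0 0 : ℝ) + 1 ≤ (M.getD i0 0 : ℝ) := by exact_mod_cast hgt
      have : (L.getD i0 0 : ℝ) * β ^ i0 + β ^ i0 ≤ (M.getD i0 0 : ℝ) * β ^ i0 := by
        nlinarith
      linarith [hps, hys, htails, hLlow, hMlow0]
    have hcast : (M.getD i0 0 : ℝ) ≤ (L.getD i0 0 : ℝ) - 1 := by
      have : M.getD i0 0 + 1 ≤ L.getD i0 0 := hlt
      have h4 : (M.getD i0 0 : ℝ) + 1 ≤ (L.getD i0 0 : ℝ) := by exact_mod_cast this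
      linarith
    have hmid : (M.getD i0 0 : ℝ) * β ^ i0 ≤ ((L.getD i0 0 : ℝ) - 1) * β ^ i0 :=
      mul_le_mul_of_nonneg_right hcast (le_of_lt hβi0)
    have hi0k : k ≤ i0 := by
      by_contra hc
      push_neg at hc
      have := hlow i0 hc
      omega
    rcases eq_or_lt_of_le hi0k with heq | hlt2
    · -- i0 = k
      have hLl0 : ∑ i ∈ Finset.range i0, (L.getD i 0 : ℝ) * β ^ i = 0 :=
        Finset.sum_eq_zero fun i hi => by
          rw [hlow i (by have := Finset.mem_range.mp hi; omega)]; simp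
      have hkm : S (i0 % m) = S (k % m) := by rw [heq]
      linarith [hps, hys, htails, hMlow, hLl0]
    · -- k < i0
      have hone : (1:ℝ) ≤ ∑ i ∈ Finset.range i0, (L.getD i 0 : ℝ) * β ^ i := by
        have hterm : (1:ℝ) ≤ (L.getD k 0 : ℝ) * β ^ k := by
          have h5 : (1:ℝ) ≤ (L.getD k 0 : ℝ) := by exact_mod_cast hbk
          have h6 : (1:ℝ) ≤ β ^ k := one_le_pow₀ hβ1
          nlinarith
        calc (1:ℝ) ≤ (L.getD k 0 : ℝ) * β ^ k := hterm
          _ ≤ ∑ i ∈ Finset.range i0, (L.getD i 0 : ℝ) * β ^ i :=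
            Finset.single_le_sum (f := fun i => (L.getD i 0 : ℝ) * β ^ i)
              (fun i _ => by positivity) (Finset.mem_range.mpr hlt2)
      have hS1 : S (k % m) ≤ 1 := hSle _
      have hS2 : 0 ≤ S (i0 % m) := hSnonneg _
      linarith [hps, hys, htails, hMlow]
  have : p = y - S (k % m) := le_antisymm hmax hqp
  linarith
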